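/- For every binary word S of length n, there exist two disjoint identical scattered subwords of S each of length at least ⌊n/3⌋. -/

import Mathlib

/-- The scattered subword of `S` indexed by the set `I`, taken in increasing order. -/
def extract {α : Type*} (S : List α) (I : Finset ℕ) : List α :=
  (I.sort (· ≤ ·)).filterMap (fun i => S[i]?)

/-- `S` has two disjoint identical scattered subwords of length `ℓ`. -/
def HasTwins {α : Type*} (S : List α) (ℓ : ℕ) : Prop :=
  ∃ I J : Finset ℕ, I ⊆ Finset.range S.length ∧ J ⊆ Finset.range S.length ∧
    Disjoint I J ∧ I.card = ℓ ∧ J.card = ℓ ∧ extract S I = extract S J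

/-- offset of first twin in block `k` -/
def c1 (S : List (Fin 2)) (k : ℕ) : ℕ :=
  if S[3*k]? = S[3*k+1]? then 0 else if S[3*k]? = S[3*k+2]? then 0 else 1

/-- offset of second twin in block `k` -/
def c2 (S : List (Fin 2)) (k : ℕ) : ℕ :=
  if S[3*k]? = S[3*k+1]? then 1 else if S[3*k]? = S[3*k+2]? then 2 else 2

lemma c1_lt_c2 (S : List (Fin 2)) (k : ℕ) : c1 S k < c2 S k := by
  unfold c1 c2; split <;> [skip; split] <;> norm_num

lemma c2_le (S : List (Fin 2)) (k : ℕ) : c2 S k ≤ 2 := by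
  unfold c2; split <;> [skip; split] <;> norm_num

lemma val_eq (S : List (Fin 2)) (k : ℕ) (h : 3*k+2 < S.length) :
    S[3*k + c1 S k]? = S[3*k + c2 S k]? := by
  unfold c1 c2
  split_ifs with h1 h2
  · simpa using h1
  · simpa using h2
  · obtain ⟨x, hx⟩ : ∃ x, S[3*k]? = some x :=
        ⟨S[3*k]'(by omega), List.getElem?_eq_getElem _⟩
    obtain ⟨y, hy⟩ : ∃ y, S[3*k+1]? = some y :=
        ⟨S[3*k+1]'(by omega), List.getElem?_eq_getElem _⟩
    obtain ⟨z, hz⟩ : ∃ z, S[3*k+2]? = some z :=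
        ⟨S[3*k+2]'(by omega), List.getElem?_eq_getElem _⟩
    rw [hx, hy] at h1
    rw [hx, hz] at h2
    have hyz : y = z := by
      fin_cases x <;> fin_cases y <;> fin_cases z <;> simp_all
    rw [hy, hz, hyz]

theorem twins_third (n : ℕ) (S : List (Fin 2)) (hS : S.length = n) :
    HasTwins S (n / 3) := by
  set m := n / 3 with hm
  have h3m : 3 * m ≤ n := by omega
  have hc1lt : ∀ k, c1 S k < c2 S k := c1_lt_c2 S
  have hc2le : ∀ k, c2 S k ≤ 2 := c2_le S
  set fI : ℕ → ℕ := fun k => 3*k + c1 S k with hfI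
  set fJ : ℕ → ℕ := fun k => 3*k + c2 S k with hfJ
  set LI := (List.range m).map fI with hLI
  set LJ := (List.range m).map fJ with hLJ
  have pI : LI.Pairwise (· < ·) := by
    rw [hLI, List.pairwise_map]
    refine (List.pairwise_lt_range (n := m)).imp ?_
    intro a b hab
    have h1 := hc1lt a; have h2 := hc2le a; have h3 := hc1lt b; have h4 := hc2le b
    simp only [hfI]; omega
  have pJ : LJ.Pairwise (· < ·) := by
    rw [hLJ, List.pairwise_map]
    refine (List.pairwise_lt_range (n := m)).imp ?_
    intro a b hab
    have h2 := hc2le a; have h4 := hc2le b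
    simp only [hfJ]; omega
  have ndI : LI.Nodup := pI.imp ne_of_lt
  have ndJ : LJ.Nodup := pJ.imp ne_of_lt
  have sI : LI.toFinset.sort (· ≤ ·) = LI :=
    (List.toFinset_sort (· ≤ ·) ndI).mpr (pI.imp le_of_lt)
  have sJ : LJ.toFinset.sort (· ≤ ·) = LJ :=
    (List.toFinset_sort (· ≤ ·) ndJ).mpr (pJ.imp le_of_lt)
  refine ⟨LI.toFinset, LJ.toFinset, ?_, ?_, ?_, ?_, ?_, ?_⟩
  · intro x hx
    rw [List.mem_toFinset, hLI, List.mem_map] at hx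
    obtain ⟨k, hk, rfl⟩ := hx
    rw [List.mem_range] at hk
    have := hc1lt k; have := hc2le k
    rw [Finset.mem_range, hS]
    simp only [hfI]; omega
  · intro x hx
    rw [List.mem_toFinset, hLJ, List.mem_map] at hx
    obtain ⟨k, hk, rfl⟩ := hx
    rw [List.mem_range] at hk
    have := hc2le k
    rw [Finset.mem_range, hS]
    simp only [hfJ]; omega
  · rw [Finset.disjoint_left]
    intro x hx hx'
    rw [List.mem_toFinset, hLI, List.mem_map] at hx
    rw [List.mem_toFinset, hLJ, List.mem_map] at hx'
    obtain ⟨k, hk, hkx⟩ := hx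
    obtain ⟨l, hl, hlx⟩ := hx'
    rw [← hlx] at hkx
    simp only [hfI, hfJ] at hkx
    have h1 := hc1lt k; have h2 := hc2le k; have h3 := hc1lt l; have h4 := hc2le l
    have hkl : k = l := by omega
    subst hkl
    omega
  · rw [List.toFinset_card_of_nodup ndI, hLI, List.length_map, List.length_range]
  · rw [List.toFinset_card_of_nodup ndJ, hLJ, List.length_map, List.length_range]
  · unfold extract
    rw [sI, sJ, hLI, hLJ, List.filterMap_map, List.filterMap_map]
    apply List.filterMap_congr
    intro k hk
    rw [List.mem_range] at hk
    exact val_eq S k (by omega)
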